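/- Let {x_k} be generated by the TRFD algorithm, assume each component F_i is convex, h is monotone, f has a global minimizer x* on Ω with D_0 := sup{‖x − x*‖_p : x ∈ Ω, f(x) ≤ f(x_0)} < ∞, and Δ_* ≥ D_0. Define the hitting times T_f(ε) := inf{k ∈ ℕ : f(x_k) − f(x*) ≤ Δ_* ε} and T_g(ε) := inf{k ∈ ℕ : ψ_{p,Δ_*}(x_k) ≤ ε}. Then T_f(ε) ≤ T_g(ε). -/

import Mathlib

open scoped ENNReal

noncomputable section

/-- The `p`-norm on `ℝ^n`, for `p ∈ [1,∞]`. -/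
def pNorm (p : ℝ≥0∞) {n : ℕ} (x : Fin n → ℝ) : ℝ :=
  if p = ∞ then ⨆ i, |x i| else (∑ i, |x i| ^ p.toReal) ^ (1 / p.toReal)

/-- The Euclidean norm on `ℝ^n`. -/
def eucNorm {n : ℕ} (x : Fin n → ℝ) : ℝ := Real.sqrt (∑ i, x i ^ 2)

/-- The operator norm of a matrix, induced by Euclidean norms. -/
def opNorm2 {m n : ℕ} (A : Matrix (Fin m) (Fin n) ℝ) : ℝ :=
  sSup ((fun v => eucNorm (A.mulVec v)) '' {v | eucNorm v ≤ 1})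

/-- Forward finite-difference approximation of the Jacobian of `F` at `x` with stepsize `τ`:
the `j`-th column is `(F (x + τ e_j) - F x) / τ`. -/
def fdMatrix {n m : ℕ} (F : (Fin n → ℝ) → (Fin m → ℝ)) (x : Fin n → ℝ) (τ : ℝ) :
    Matrix (Fin m) (Fin n) ℝ :=
  Matrix.of fun i j => (F (x + Pi.single j τ) i - F x i) / τ

/-- Stationarity measure `ψ_{p,r}(x)`. -/
def psi {n m : ℕ} (Ω : Set (Fin n → ℝ)) (F : (Fin n → ℝ) → (Fin m → ℝ))
    (h : (Fin m → ℝ) → ℝ) (J : (Fin n → ℝ) → Matrix (Fin m) (Fin n) ℝ)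
    (p : ℝ≥0∞) (r : ℝ) (x : Fin n → ℝ) : ℝ :=
  r⁻¹ * (h (F x) -
    sInf ((fun s => h (F x + (J x).mulVec s)) '' {s | x + s ∈ Ω ∧ pNorm p s ≤ r}))

/-- Approximate stationarity measure `η_{p,r}(x; A)`. -/
def eta {n m : ℕ} (Ω : Set (Fin n → ℝ)) (F : (Fin n → ℝ) → (Fin m → ℝ))
    (h : (Fin m → ℝ) → ℝ) (p : ℝ≥0∞) (r : ℝ) (x : Fin n → ℝ)
    (A : Matrix (Fin m) (Fin n) ℝ) : ℝ :=
  r⁻¹ * (h (F x) -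
    sInf ((fun s => h (F x + A.mulVec s)) '' {s | x + s ∈ Ω ∧ pNorm p s ≤ r}))

/-- The TRFD algorithm: `x`, `τ`, `Δ`, `A`, `d`, `ρ` are the iterates, finite-difference
stepsizes, trust-region radii, finite-difference Jacobian approximations, trial steps and
ratios generated by TRFD with parameters `ε, σ, α, θ, Δstar` from the point `x 0`. -/
def TRFDrun {n m : ℕ} (Ω : Set (Fin n → ℝ)) (F : (Fin n → ℝ) → (Fin m → ℝ))
    (h : (Fin m → ℝ) → ℝ) (p : ℝ≥0∞)
    (Lh cpm cnp ε σ α θ Δstar : ℝ)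
    (x : ℕ → Fin n → ℝ) (τ Δ : ℕ → ℝ) (A : ℕ → Matrix (Fin m) (Fin n) ℝ)
    (d : ℕ → Fin n → ℝ) (ρ : ℕ → ℝ) : Prop :=
  x 0 ∈ Ω ∧
  τ 0 = ε / (Lh * σ * cpm * cnp * Real.sqrt n) ∧
  τ 0 * Real.sqrt n ≤ Δ 0 ∧ Δ 0 ≤ Δstar ∧
  (∀ k, A k = fdMatrix F (x k) (τ k)) ∧
  (∀ k,
    -- unsuccessful iteration of type I
    (eta Ω F h p Δstar (x k) (A k) < ε / 2 ∧
      x (k + 1) = x k ∧ Δ (k + 1) = Δ k ∧ τ (k + 1) = τ k / 2) ∨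
    (ε / 2 ≤ eta Ω F h p Δstar (x k) (A k) ∧
      -- the trial step is feasible and achieves a `θ`-fraction of the optimal model decrease
      pNorm p (d k) ≤ Δ k ∧ x k + d k ∈ Ω ∧
      θ * (h (F (x k)) -
          sInf ((fun s => h (F (x k) + (A k).mulVec s)) ''
            {s | x k + s ∈ Ω ∧ pNorm p s ≤ Δ k})) ≤
        h (F (x k)) - h (F (x k) + (A k).mulVec (d k)) ∧
      ρ k = (h (F (x k)) - h (F (x k + d k))) /
            (h (F (x k)) - h (F (x k) + (A k).mulVec (d k))) ∧
      -- successful iteration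
      ((α ≤ ρ k ∧ x (k + 1) = x k + d k ∧ Δ (k + 1) = min (2 * Δ k) Δstar ∧
          τ (k + 1) = τ k) ∨
      -- unsuccessful iteration of type II
       (ρ k < α ∧ τ k * Real.sqrt n ≤ Δ k / 2 ∧
          x (k + 1) = x k ∧ Δ (k + 1) = Δ k / 2 ∧ τ (k + 1) = τ k) ∨
      -- unsuccessful iteration of type III
       (ρ k < α ∧ Δ k / 2 < τ k * Real.sqrt n ∧
          x (k + 1) = x k ∧ Δ (k + 1) = Δ k / 2 ∧ τ (k + 1) = τ k / 2))))

open Filter Topology Set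

lemma pNorm_neg (p : ℝ≥0∞) {n : ℕ} (v : Fin n → ℝ) : pNorm p (-v) = pNorm p v := by
  unfold pNorm; simp [abs_neg]

lemma pNorm_zero {n : ℕ} (hn : 1 ≤ n) (p : ℝ≥0∞) (hp : 1 ≤ p) :
    pNorm p (0 : Fin n → ℝ) = 0 := by
  unfold pNorm
  split_ifs with hpi
  · have : Nonempty (Fin n) := ⟨⟨0, hn⟩⟩
    simp [ciSup_const]
  · have h1 : (1:ℝ) ≤ p.toReal := by
      rw [← ENNReal.toReal_one]; exact ENNReal.toReal_mono hpi hp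
    have ht : p.toReal ≠ 0 := by linarith
    simp [Real.zero_rpow ht]
    exact Real.zero_rpow (by positivity)

lemma eucNorm_nonneg {n : ℕ} (v : Fin n → ℝ) : 0 ≤ eucNorm v := Real.sqrt_nonneg _

lemma abs_le_eucNorm {n : ℕ} (v : Fin n → ℝ) (j : Fin n) : |v j| ≤ eucNorm v := by
  rw [← Real.sqrt_sq_eq_abs]
  exact Real.sqrt_le_sqrt (Finset.single_le_sum (f := fun i => v i ^ 2)
    (fun i _ => sq_nonneg _) (Finset.mem_univ j))

lemma eucNorm_mulVec_le {m n : ℕ} (A : Matrix (Fin m) (Fin n) ℝ) (s : Fin n → ℝ) :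
    eucNorm (A.mulVec s) ≤ Real.sqrt (∑ i, (∑ j, |A i j|) ^ 2) * eucNorm s := by
  have key : ∀ i, (A.mulVec s i) ^ 2 ≤ (∑ j, |A i j|) ^ 2 * eucNorm s ^ 2 := by
    intro i
    have h1 : |A.mulVec s i| ≤ (∑ j, |A i j|) * eucNorm s := by
      calc |A.mulVec s i| = |∑ j, A i j * s j| := rfl
        _ ≤ ∑ j, |A i j * s j| := Finset.abs_sum_le_sum_abs _ _
        _ ≤ ∑ j, |A i j| * eucNorm s := by
            refine Finset.sum_le_sum fun j _ => ?_
            rw [abs_mul]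
            exact mul_le_mul_of_nonneg_left (abs_le_eucNorm s j) (abs_nonneg _)
        _ = (∑ j, |A i j|) * eucNorm s := by rw [Finset.sum_mul]
    calc (A.mulVec s i) ^ 2 = |A.mulVec s i| ^ 2 := by rw [sq_abs]
      _ ≤ ((∑ j, |A i j|) * eucNorm s) ^ 2 := by
          apply sq_le_sq' <;> nlinarith [abs_nonneg (A.mulVec s i)]
      _ = (∑ j, |A i j|) ^ 2 * eucNorm s ^ 2 := by ring
  have h2 : ∑ i, (A.mulVec s i) ^ 2 ≤ (∑ i, (∑ j, |A i j|) ^ 2) * eucNorm s ^ 2 := by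
    rw [Finset.sum_mul]; exact Finset.sum_le_sum fun i _ => key i
  calc eucNorm (A.mulVec s) = Real.sqrt (∑ i, (A.mulVec s i) ^ 2) := rfl
    _ ≤ Real.sqrt ((∑ i, (∑ j, |A i j|) ^ 2) * eucNorm s ^ 2) := Real.sqrt_le_sqrt h2
    _ = Real.sqrt (∑ i, (∑ j, |A i j|) ^ 2) * eucNorm s := by
        rw [Real.sqrt_mul (by positivity), Real.sqrt_sq (eucNorm_nonneg s)]

lemma grad_ineq {n : ℕ} {g : (Fin n → ℝ) → ℝ} (hg : ConvexOn ℝ Set.univ g)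
    {L : (Fin n → ℝ) →L[ℝ] ℝ} {x : Fin n → ℝ} (hd : HasFDerivAt g L x) (s : Fin n → ℝ) :
    g x + L s ≤ g (x + s) := by
  have hc : HasDerivAt (fun t : ℝ => x + t • s) s 0 := by
    simpa using ((hasDerivAt_id (0:ℝ)).smul_const s).const_add x
  have hφ : HasDerivAt (fun t : ℝ => g (x + t • s)) (L s) 0 := by
    have hd' : HasFDerivAt g L ((fun t : ℝ => x + t • s) 0) := by simpa using hd
    exact hd'.comp_hasDerivAt (0:ℝ) hc
  have hslope : Filter.Tendsto (slope (fun t : ℝ => g (x + t • s)) 0) (𝓝[>] 0) (𝓝 (L s)) :=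
    (hasDerivAt_iff_tendsto_slope.mp hφ).mono_left
      (nhdsWithin_mono _ fun t ht => ne_of_gt ht)
  have hev : ∀ᶠ t in 𝓝[>] (0:ℝ),
      slope (fun t : ℝ => g (x + t • s)) 0 t ≤ g (x + s) - g x := by
    filter_upwards [Ioc_mem_nhdsGT_of_mem (Set.left_mem_Ico.mpr one_pos)] with t ht
    have h0t : 0 < t := ht.1
    have ht1 : t ≤ 1 := ht.2
    have hcvx := hg.2 (Set.mem_univ x) (Set.mem_univ (x + s))
      (by linarith : (0:ℝ) ≤ 1 - t) (le_of_lt h0t) (by ring)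
    have hpt : (1 - t) • x + t • (x + s) = x + t • s := by
      simp [smul_add, sub_smul, one_smul]; abel
    rw [hpt] at hcvx
    simp only [smul_eq_mul] at hcvx
    rw [slope_def_field]
    have : (g (x + t • s) - g (x + 0 • s)) / (t - 0) ≤ g (x + s) - g x := by
      rw [div_le_iff₀ (by simpa using h0t)]
      simp only [zero_smul, add_zero, sub_zero]
      nlinarith [hcvx]
    simpa using this
  have := le_of_tendsto hslope hev
  linarith


/-- Lemma 3.13: the hitting time T_f is at most T_g (in ℕ∞). -/
theorem stmt18
    {n m : ℕ} (hn : 1 ≤ n) (hm : 1 ≤ m) (p : ℝ≥0∞) (hp : 1 ≤ p)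
    (Ω : Set (Fin n → ℝ)) (hΩne : Ω.Nonempty) (hΩcl : IsClosed Ω) (hΩcv : Convex ℝ Ω)
    (F : (Fin n → ℝ) → (Fin m → ℝ)) (J : (Fin n → ℝ) → Matrix (Fin m) (Fin n) ℝ)
    (hJ : ∀ y, HasFDerivAt F (LinearMap.toContinuousLinearMap (Matrix.mulVecLin (J y))) y)
    (LJ : ℝ) (hLJ : 0 < LJ)
    (hJLip : ∀ y z, opNorm2 (J y - J z) ≤ LJ * eucNorm (y - z))
    (h : (Fin m → ℝ) → ℝ) (hconv : ConvexOn ℝ Set.univ h)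
    (Lh : ℝ) (hLh : 0 < Lh)
    (hhLip : ∀ z w, |h z - h w| ≤ Lh * pNorm p (z - w))
    (cnp cpm : ℝ) (hcnp1 : 1 ≤ cnp) (hcpm1 : 1 ≤ cpm)
    (hcnp : ∀ v : Fin n → ℝ, eucNorm v ≤ cnp * pNorm p v)
    (hcpm : ∀ z : Fin m → ℝ, pNorm p z ≤ cpm * eucNorm z)
    (ε σ α θ Δstar : ℝ) (hε : 0 < ε) (hσ : 0 < σ)
    (hα0 : 0 < α) (hα1 : α < 1) (hθ0 : 0 < θ) (hθ1 : θ ≤ 1)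
    (x : ℕ → Fin n → ℝ) (τ Δ : ℕ → ℝ) (A : ℕ → Matrix (Fin m) (Fin n) ℝ)
    (d : ℕ → Fin n → ℝ) (ρ : ℕ → ℝ)
    (hrun : TRFDrun Ω F h p Lh cpm cnp ε σ α θ Δstar x τ Δ A d ρ)
    (hFconv : ∀ i, ConvexOn ℝ Set.univ (fun y => F y i))
    (hmono : ∀ u v : Fin m → ℝ, (∀ i, u i ≤ v i) → h u ≤ h v)
    (xstar : Fin n → ℝ) (hxstarΩ : xstar ∈ Ω)
    (hxstarmin : ∀ y ∈ Ω, h (F xstar) ≤ h (F y))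
    (D₀ : ℝ) (hD₀ : ∀ y ∈ Ω, h (F y) ≤ h (F (x 0)) → pNorm p (y - xstar) ≤ D₀)
    (hΔstarD₀ : D₀ ≤ Δstar)
    :
    sInf {c : ℕ∞ | ∃ k : ℕ, c = k ∧ h (F (x k)) - h (F xstar) ≤ Δstar * ε} ≤
    sInf {c : ℕ∞ | ∃ k : ℕ, c = k ∧ psi Ω F h J p Δstar (x k) ≤ ε} := by
  obtain ⟨hx0, hτ0def, hτΔ0, hΔ0star, hAdef, hstep⟩ := hrun
  have hnpos : (0:ℝ) < n := by exact_mod_cast hn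
  have hsqn : 0 < Real.sqrt n := Real.sqrt_pos.mpr hnpos
  have hτ0pos : 0 < τ 0 := by rw [hτ0def]; positivity
  have hΔ0pos : 0 < Δ 0 := lt_of_lt_of_le (by positivity) hτΔ0
  have hΔstarpos : 0 < Δstar := hΔ0pos.trans_le hΔ0star
  have hΔpos : ∀ k, 0 < Δ k := by
    intro k; induction k with
    | zero => exact hΔ0pos
    | succ k ih =>
      rcases hstep k with ⟨_, _, hΔe, _⟩ | ⟨_, _, _, _, _, hcase⟩
      · rw [hΔe]; exact ih
      · rcases hcase with ⟨_, _, hΔe, _⟩ | ⟨_, _, _, hΔe, _⟩ | ⟨_, _, _, hΔe, _⟩ <;>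
          rw [hΔe]
        · exact lt_min (by linarith) hΔstarpos
        · linarith
        · linarith
  -- every relevant model set is bounded below
  have hbdd : ∀ (y : Fin n → ℝ) (B : Matrix (Fin m) (Fin n) ℝ) (r : ℝ), 0 ≤ r →
      BddBelow ((fun s => h (F y + B.mulVec s)) '' {s | y + s ∈ Ω ∧ pNorm p s ≤ r}) := by
    intro y B r hr
    set CB := Real.sqrt (∑ i, (∑ j, |B i j|) ^ 2) with hCBdef
    have hCB0 : 0 ≤ CB := Real.sqrt_nonneg _
    refine ⟨h (F y) - Lh * (cpm * (CB * (cnp * r))), ?_⟩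
    rintro z ⟨s, ⟨hsΩ, hsr⟩, rfl⟩
    have h1 : h (F y) - h (F y + B.mulVec s) ≤ Lh * pNorm p (B.mulVec s) := by
      have hl := hhLip (F y) (F y + B.mulVec s)
      have heq : F y - (F y + B.mulVec s) = -(B.mulVec s) := by abel
      rw [heq, pNorm_neg] at hl
      exact (le_abs_self _).trans hl
    have h2 : pNorm p (B.mulVec s) ≤ cpm * (CB * (cnp * r)) := by
      have e4 : eucNorm s ≤ cnp * r :=
        (hcnp s).trans (mul_le_mul_of_nonneg_left hsr (by linarith))
      have e5 : eucNorm (B.mulVec s) ≤ CB * (cnp * r) :=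
        (eucNorm_mulVec_le B s).trans (mul_le_mul_of_nonneg_left e4 hCB0)
      exact (hcpm _).trans (mul_le_mul_of_nonneg_left e5 (by linarith))
    have h3 : Lh * pNorm p (B.mulVec s) ≤ Lh * (cpm * (CB * (cnp * r))) :=
      mul_le_mul_of_nonneg_left h2 hLh.le
    simp only [Set.mem_setOf_eq]
    linarith
  -- iterates stay in Ω and objective is nonincreasing vs x 0
  have hGood : ∀ k, x k ∈ Ω ∧ h (F (x k)) ≤ h (F (x 0)) := by
    intro k; induction k with
    | zero => exact ⟨hx0, le_refl _⟩
    | succ k ih =>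
      rcases hstep k with ⟨_, hxe, _, _⟩ | ⟨hη, hdle, hdΩ, hθk, hρdef, hcase⟩
      · rw [hxe]; exact ih
      · rcases hcase with ⟨hαρ, hxe, _, _⟩ | ⟨_, _, hxe, _, _⟩ | ⟨_, _, hxe, _, _⟩
        · rw [hxe]
          refine ⟨hdΩ, ?_⟩
          set M := h (F (x k)) - h (F (x k) + (A k).mulVec (d k)) with hMdef
          have hinf_le : sInf ((fun s => h (F (x k) + (A k).mulVec s)) ''
              {s | x k + s ∈ Ω ∧ pNorm p s ≤ Δ k}) ≤ h (F (x k)) := by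
            refine csInf_le (hbdd _ _ _ (hΔpos k).le) ?_
            exact ⟨0, ⟨by simpa using ih.1,
              by rw [pNorm_zero hn p hp]; exact (hΔpos k).le⟩,
              by simp [Matrix.mulVec_zero]⟩
          have hM0 : 0 ≤ M := by nlinarith [hθk, hinf_le, hθ0]
          have hMne : M ≠ 0 := by
            intro h0
            have : ρ k = 0 := by rw [hρdef, h0, div_zero]
            linarith [hαρ, hα0]
          have hMpos : 0 < M := lt_of_le_of_ne hM0 (Ne.symm hMne)
          have hαM : α * M ≤ h (F (x k)) - h (F (x k + d k)) := by
            rw [hρdef] at hαρ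
            exact (le_div_iff₀ hMpos).mp hαρ
          have : h (F (x k + d k)) ≤ h (F (x k)) := by nlinarith [mul_pos hα0 hMpos]
          exact this.trans ih.2
        · rw [hxe]; exact ih
        · rw [hxe]; exact ih
  -- the key implication: ψ small ⇒ function gap small
  have key : ∀ k, psi Ω F h J p Δstar (x k) ≤ ε →
      h (F (x k)) - h (F xstar) ≤ Δstar * ε := by
    intro k hψ
    obtain ⟨hxkΩ, hfk⟩ := hGood k
    set T := (fun s => h (F (x k) + (J (x k)).mulVec s)) ''
      {s | x k + s ∈ Ω ∧ pNorm p s ≤ Δstar} with hTdef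
    have hmemT : h (F (x k) + (J (x k)).mulVec (xstar - x k)) ∈ T := by
      refine ⟨xstar - x k, ⟨?_, ?_⟩, rfl⟩
      · show x k + (xstar - x k) ∈ Ω
        have : x k + (xstar - x k) = xstar := by abel
        rw [this]; exact hxstarΩ
      · show pNorm p (xstar - x k) ≤ Δstar
        have : pNorm p (xstar - x k) = pNorm p (x k - xstar) := by
          rw [← pNorm_neg p (x k - xstar), neg_sub]
        rw [this]; exact (hD₀ (x k) hxkΩ hfk).trans hΔstarD₀
    have hval : h (F (x k) + (J (x k)).mulVec (xstar - x k)) ≤ h (F xstar) := by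
      apply hmono
      intro i
      have hdi : HasFDerivAt
          (⇑(ContinuousLinearMap.proj (R := ℝ) (φ := fun _ : Fin m => ℝ) i) ∘ F)
          ((ContinuousLinearMap.proj i).comp
            (LinearMap.toContinuousLinearMap (Matrix.mulVecLin (J (x k))))) (x k) :=
        (ContinuousLinearMap.hasFDerivAt _).comp (x k) (hJ (x k))
      have hgi := grad_ineq (hFconv i) hdi (xstar - x k)
      have heval : ((ContinuousLinearMap.proj i).comp
          (LinearMap.toContinuousLinearMap (Matrix.mulVecLin (J (x k)))))
          (xstar - x k) = (J (x k)).mulVec (xstar - x k) i := by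
        simp [Matrix.mulVecLin_apply]
      rw [heval] at hgi
      have hxx : x k + (xstar - x k) = xstar := by abel
      rw [hxx] at hgi
      simpa using hgi
    have hinfT : sInf T ≤ h (F xstar) :=
      (csInf_le (hbdd _ _ _ hΔstarpos.le) hmemT).trans hval
    unfold psi at hψ
    rw [← hTdef] at hψ
    have hmul := mul_le_mul_of_nonneg_left hψ hΔstarpos.le
    rw [← mul_assoc, mul_inv_cancel₀ hΔstarpos.ne', one_mul] at hmul
    linarith
  apply sInf_le_sInf
  rintro c ⟨k, rfl, hψk⟩
  exact ⟨k, rfl, key k hψk⟩
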